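/- (Pohozaev integral, case γ > 1) Let d ≥ 3, γ > 1, α = 1/(γ−1), and suppose w ∈ C²((0,R)) ∩ C¹([0,R)) is positive and satisfies w'' + (d−1)r^{−1}w' = −4π((γ−1)/γ)w^α on (0,R), with w, w' bounded near 0 and w'(0) = 0. Then for all r ∈ (0,R): 2π((γ−1)/γ)(2d/(1+α) − (d−2)) ∫_0^r w(y)^{α+1} y^{d−1} dy = (1/2)w'(r)²r^d + 4π((γ−1)/γ)² w(r)^{α+1} r^d + (1/2)(d−2)w'(r)w(r)r^{d−1}. -/

import Mathlib

open Real Set intervalIntegral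

theorem pohozaev_polytropic
    (d : ℕ) (hd : 3 ≤ d) (γ : ℝ) (hγ : 1 < γ) (α : ℝ) (hα : α = 1 / (γ - 1))
    (R : ℝ) (hR : 0 < R)
    (w w' w'' : ℝ → ℝ)
    (hpos : ∀ r ∈ Ico 0 R, 0 < w r)
    (hC1 : ∀ r ∈ Ico 0 R, HasDerivWithinAt w (w' r) (Ico 0 R) r)
    (hC1' : ContinuousOn w' (Ico 0 R))
    (hC2 : ∀ r ∈ Ioo 0 R, HasDerivAt w' (w'' r) r)
    (heq : ∀ r ∈ Ioo 0 R,
      w'' r + ((d : ℝ) - 1) * r⁻¹ * w' r = -(4 * π) * ((γ - 1) / γ) * w r ^ α)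
    (hwbdd : ∃ M ε, 0 < ε ∧ ∀ r ∈ Ioo 0 ε, |w r| ≤ M ∧ |w' r| ≤ M)
    (hw'0 : w' 0 = 0) :
    ∀ r ∈ Ioo 0 R,
      2 * π * ((γ - 1) / γ) * (2 * d / (1 + α) - ((d : ℝ) - 2)) *
          (∫ y in (0:ℝ)..r, w y ^ (α + 1) * y ^ (d - 1)) =
        (1 / 2) * w' r ^ 2 * r ^ d + 4 * π * ((γ - 1) / γ) ^ 2 * w r ^ (α + 1) * r ^ d +
          (1 / 2) * ((d : ℝ) - 2) * w' r * w r * r ^ (d - 1) := by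
  intro r hr
  obtain ⟨hr0, hrR⟩ := hr
  have hγ1 : (0:ℝ) < γ - 1 := by linarith
  have hγne : γ ≠ 0 := by linarith
  set c : ℝ := (γ - 1) / γ with hc
  have hα1 : α + 1 = γ / (γ - 1) := by rw [hα]; field_simp; ring
  have hcα : c * (α + 1) = 1 := by rw [hα1, hc]; field_simp
  have hα0 : 0 < α := by rw [hα]; positivity
  have h1α : (1:ℝ) + α ≠ 0 := by linarith
  have hK : 2 * (d:ℝ) / (1 + α) - ((d:ℝ) - 2) = 2 * (d:ℝ) * c - ((d:ℝ) - 2) := by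
    have h : (1:ℝ) + α = γ / (γ - 1) := by rw [hα]; field_simp; ring
    rw [h, hc]
    field_simp
  set K : ℝ := 2 * π * c * (2 * (d:ℝ) * c - ((d:ℝ) - 2)) with hKdef
  have hwc : ContinuousOn w (Ico 0 R) := fun x hx => (hC1 x hx).continuousWithinAt
  have hsub : Icc 0 r ⊆ Ico 0 R := fun y hy => ⟨hy.1, lt_of_le_of_lt hy.2 hrR⟩
  have hwcc : ContinuousOn w (Icc 0 r) := hwc.mono hsub
  have hw'cc : ContinuousOn w' (Icc 0 r) := hC1'.mono hsub
  have hposc : ∀ y ∈ Icc 0 r, 0 < w y := fun y hy => hpos y (hsub hy)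
  set Φ : ℝ → ℝ := fun s =>
    1/2 * (w' s ^ 2 * s ^ d) + 4 * π * c ^ 2 * (w s ^ (α+1) * s ^ d)
      + 1/2 * ((d:ℝ) - 2) * (w' s * w s * s ^ (d-1)) with hΦdef
  have hrpowc : ContinuousOn (fun s => w s ^ (α+1)) (Icc 0 r) :=
    hwcc.rpow_const (fun y hy => Or.inl (hposc y hy).ne')
  have hΦcont : ContinuousOn Φ (Icc 0 r) := by
    apply ContinuousOn.add
    apply ContinuousOn.add
    · exact continuousOn_const.mul ((hw'cc.pow 2).mul (continuous_pow d).continuousOn)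
    · exact continuousOn_const.mul (hrpowc.mul (continuous_pow d).continuousOn)
    · exact continuousOn_const.mul ((hw'cc.mul hwcc).mul (continuous_pow (d-1)).continuousOn)
  have hintf : IntervalIntegrable (fun y => w y ^ (α+1) * y ^ (d-1)) MeasureTheory.volume 0 r := by
    apply ContinuousOn.intervalIntegrable
    rw [uIcc_of_le hr0.le]
    exact hrpowc.mul (continuous_pow (d-1)).continuousOn
  have hintg : IntervalIntegrable (fun y => K * (w y ^ (α+1) * y ^ (d-1)))
      MeasureTheory.volume 0 r := hintf.const_mul K
  have hderiv : ∀ x ∈ Ioo 0 r,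
      HasDerivWithinAt Φ (K * (w x ^ (α+1) * x ^ (d-1))) (Ioi x) x := by
    intro x hx
    have hxR : x ∈ Ioo 0 R := ⟨hx.1, lt_trans hx.2 hrR⟩
    have hxne : x ≠ 0 := hx.1.ne'
    have hA : 0 < w x := hpos x ⟨hx.1.le, hxR.2⟩
    have hnhds : Ico 0 R ∈ nhds x := Ico_mem_nhds hx.1 hxR.2
    have hw : HasDerivAt w (w' x) x :=
      (hC1 x ⟨hx.1.le, hxR.2⟩).hasDerivAt hnhds
    have hw' : HasDerivAt w' (w'' x) x := hC2 x hxR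
    have hrpow : HasDerivAt (fun s => w s ^ (α+1)) ((α+1) * w x ^ α * w' x) x := by
      have h := hw.rpow_const (p := α + 1) (Or.inl hA.ne')
      rw [show α + 1 - 1 = α by ring] at h
      convert h using 1
      ring
    have Hd := ((((hw'.pow 2).mul (hasDerivAt_pow d x)).const_mul ((1:ℝ)/2)).add
        ((hrpow.mul (hasDerivAt_pow d x)).const_mul (4 * π * c ^ 2))).add
        (((hw'.mul hw).mul (hasDerivAt_pow (d-1) x)).const_mul (1/2 * ((d:ℝ) - 2)))
    apply HasDerivAt.hasDerivWithinAt
    convert Hd using 1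
    case e'_8 => rfl
    have hw''eq : w'' x = -(4 * π) * c * w x ^ α - ((d:ℝ) - 1) * x⁻¹ * w' x := by
      have := heq x hxR; linarith
    have hd11 : d - 1 - 1 = d - 2 := by omega
    have e1 : x ^ (d-1) = x ^ (d-2) * x := by rw [← pow_succ]; congr 1; omega
    have e2 : x ^ d = x ^ (d-2) * x ^ 2 := by rw [← pow_add]; congr 1; omega
    have ecast : ((d - 1 : ℕ) : ℝ) = (d:ℝ) - 1 := by
      have h1 : 1 ≤ d := by omega
      push_cast [Nat.cast_sub h1]
      ring
    have hA1 : w x ^ (α+1) = w x ^ α * w x := Real.rpow_add_one hA.ne' α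
    have hxinv : x⁻¹ * x = 1 := inv_mul_cancel₀ hxne
    rw [hw''eq, hd11, ecast, hA1, e1, e2, hKdef, Pi.pow_apply, Pi.mul_apply]
    linear_combination (-(4*π*c*(w x ^ α)*(w' x)*(x^(d-2))*x^2)) * hcα +
      (((d:ℝ)-1)*(w' x)^2*(x^(d-2))*x
        + (1/2)*((d:ℝ)-2)*((d:ℝ)-1)*(w' x)*(w x)*(x^(d-2))) * hxinv
  have key := intervalIntegral.integral_eq_sub_of_hasDeriv_right_of_le hr0.le hΦcont hderiv hintg
  have hΦ0 : Φ 0 = 0 := by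
    have h1 : (0:ℝ) ^ d = 0 := zero_pow (by omega)
    have h2 : (0:ℝ) ^ (d-1) = 0 := zero_pow (by omega)
    simp [hΦdef, h1, h2]
  rw [intervalIntegral.integral_const_mul, hΦ0, sub_zero] at key
  rw [hK, ← hKdef, key]
  simp only [hΦdef]
  ring
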